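/- Let T be the generalized Cantor set built from (α_k) with 0 < α_k < 1/2 and α_k → 1/2. Then T has no isolated points on the left at 0 in the following quantitative sense: for every k, the point ∏_{j<k} α_j · α_k = ∏_{j≤k} α_j belongs to T and is right-scattered with gap μ(∏_{j≤k} α_j) = (1 − 2α_k) ∏_{j<k} α_j, so μ(β)/β = (1 − 2α_k)/α_k at β = ∏_{j≤k} α_j. -/

import Mathlib

/-- Level-`k` approximation of the generalized Cantor set built from ratios
`α n, α (n+1), …` (applied outermost first). `genA α n (k+1)` is obtained from
`genA α n k`-structure by keeping the two closed end-intervals of relative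
length `α n` of `[0,1]` and recursing with the shifted sequence. -/
def genA (α : ℕ → ℝ) : ℕ → ℕ → Set ℝ
  | _, 0 => Set.Icc 0 1
  | n, (k + 1) =>
      ((fun x => α n * x) '' genA α (n + 1) k) ∪
      ((fun x => 1 - α n + α n * x) '' genA α (n + 1) k)

/-- The generalized Cantor set built from the sequence of ratios `α`. -/
def genCantor (α : ℕ → ℝ) : Set ℝ := ⋂ k, genA α 0 k

/-- The graininess (forward-jump gap) of a set `T` at `β`. -/
noncomputable def mu (T : Set ℝ) (β : ℝ) : ℝ := sInf {t ∈ T | β < t} - β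

open Filter

section Aux

variable {α : ℕ → ℝ}

lemma aux_prod_pos (hα : ∀ k, 0 < α k ∧ α k < 1 / 2) (k n : ℕ) : 0 < ∏ j ∈ Finset.range k, α (n + j) :=
  Finset.prod_pos fun _ _ => (hα _).1

lemma aux_prod_le_one (hα : ∀ k, 0 < α k ∧ α k < 1 / 2) (k n : ℕ) : ∏ j ∈ Finset.range k, α (n + j) ≤ 1 :=
  Finset.prod_le_one (fun _ _ => (hα _).1.le) (fun j _ => by nlinarith [(hα (n + j)).2])

lemma aux_prod_shift (n k : ℕ) :
    ∏ j ∈ Finset.range (k + 1), α (n + j) = α n * ∏ j ∈ Finset.range k, α (n + 1 + j) := by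
  rw [Finset.prod_range_succ']
  rw [Finset.prod_congr rfl (fun j _ => by rw [show n + (j + 1) = n + 1 + j from by omega])]
  simp [mul_comm]

lemma genA_subset (hα : ∀ k, 0 < α k ∧ α k < 1 / 2) (k : ℕ) : ∀ n, genA α n k ⊆ Set.Icc 0 1 := by
  induction k with
  | zero => intro n; exact Set.Subset.rfl
  | succ k ih =>
    intro n x hx
    simp only [genA, Set.mem_union, Set.mem_image] at hx
    have h1 := (hα n).1
    have h2 := (hα n).2
    rcases hx with ⟨y, hy, rfl⟩ | ⟨y, hy, rfl⟩ <;>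
      obtain ⟨hy1, hy2⟩ := ih (n + 1) hy <;>
      constructor <;> nlinarith

lemma one_mem_genA (hα : ∀ k, 0 < α k ∧ α k < 1 / 2) (k : ℕ) : ∀ n, (1 : ℝ) ∈ genA α n k := by
  induction k with
  | zero => intro n; exact ⟨zero_le_one, le_refl 1⟩
  | succ k ih =>
    intro n
    simp only [genA, Set.mem_union, Set.mem_image]
    exact Or.inr ⟨1, ih (n + 1), by ring⟩

lemma zero_mem_genA (hα : ∀ k, 0 < α k ∧ α k < 1 / 2) (k : ℕ) : ∀ n, (0 : ℝ) ∈ genA α n k := by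
  induction k with
  | zero => intro n; exact ⟨le_refl 0, zero_le_one⟩
  | succ k ih =>
    intro n
    simp only [genA, Set.mem_union, Set.mem_image]
    exact Or.inl ⟨0, ih (n + 1), by ring⟩

lemma beta_mem_genA (hα : ∀ k, 0 < α k ∧ α k < 1 / 2) (k : ℕ) :
    ∀ n m, (∏ j ∈ Finset.range (k + 1), α (n + j)) ∈ genA α n m := by
  induction k with
  | zero =>
    intro n m
    cases m with
    | zero =>
      simp only [Nat.zero_add, Finset.prod_range_one, Nat.add_zero, genA]
      exact ⟨(hα n).1.le, by nlinarith [(hα n).2]⟩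
    | succ m =>
      simp only [Nat.zero_add, Finset.prod_range_one, Nat.add_zero, genA, Set.mem_union, Set.mem_image]
      exact Or.inl ⟨1, one_mem_genA hα m (n + 1), by ring⟩
  | succ k ih =>
    intro n m
    cases m with
    | zero =>
      exact ⟨(aux_prod_pos hα _ _).le, aux_prod_le_one hα _ _⟩
    | succ m =>
      simp only [genA, Set.mem_union, Set.mem_image]
      exact Or.inl ⟨_, ih (n + 1) m, (aux_prod_shift (n := n) (k + 1)).symm⟩

lemma gamma_mem_genA (hα : ∀ k, 0 < α k ∧ α k < 1 / 2) (k : ℕ) :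
    ∀ n m, ((∏ j ∈ Finset.range k, α (n + j)) * (1 - α (n + k))) ∈ genA α n m := by
  induction k with
  | zero =>
    intro n m
    cases m with
    | zero =>
      simp only [Finset.range_zero, Finset.prod_empty, Nat.add_zero, one_mul, genA]
      exact ⟨by nlinarith [(hα n).2], by nlinarith [(hα n).1]⟩
    | succ m =>
      simp only [Finset.range_zero, Finset.prod_empty, Nat.add_zero, one_mul, genA,
        Set.mem_union, Set.mem_image]
      exact Or.inr ⟨0, zero_mem_genA hα m (n + 1), by ring⟩
  | succ k ih =>
    intro n m
    cases m with
    | zero =>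
      constructor
      · have := aux_prod_pos hα (k + 1) n
        have := (hα (n + (k + 1))).2
        nlinarith
      · have h1 := aux_prod_pos hα (k + 1) n
        have h2 := aux_prod_le_one hα (k + 1) n
        have h3 := (hα (n + (k + 1))).1
        nlinarith
    | succ m =>
      simp only [genA, Set.mem_union, Set.mem_image]
      refine Or.inl ⟨(∏ j ∈ Finset.range k, α (n + 1 + j)) * (1 - α (n + 1 + k)),
        ih (n + 1) m, ?_⟩
      rw [show n + (k + 1) = n + 1 + k from by omega, aux_prod_shift, mul_assoc]

lemma gap_genA (hα : ∀ k, 0 < α k ∧ α k < 1 / 2) (k : ℕ) :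
    ∀ n x, x ∈ genA α n (k + 1) →
      x ≤ ∏ j ∈ Finset.range (k + 1), α (n + j) ∨
      (∏ j ∈ Finset.range k, α (n + j)) * (1 - α (n + k)) ≤ x := by
  induction k with
  | zero =>
    intro n x hx
    simp only [genA, Set.mem_union, Set.mem_image] at hx
    have h1 := (hα n).1
    rcases hx with ⟨y, hy, rfl⟩ | ⟨y, hy, rfl⟩
    · left
      simp only [Nat.zero_add, Finset.prod_range_one, Nat.add_zero]
      nlinarith [hy.1, hy.2]
    · right
      simp only [Finset.range_zero, Finset.prod_empty, Nat.add_zero, one_mul]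
      nlinarith [hy.1, hy.2]
  | succ k ih =>
    intro n x hx
    simp only [genA, Set.mem_union, Set.mem_image] at hx
    have h1 := (hα n).1
    have h2 := (hα n).2
    rcases hx with ⟨y, hy, rfl⟩ | ⟨y, hy, rfl⟩
    · rcases ih (n + 1) y hy with h | h
      · left
        rw [aux_prod_shift]
        exact mul_le_mul_of_nonneg_left h h1.le
      · right
        rw [show n + (k + 1) = n + 1 + k from by omega, aux_prod_shift, mul_assoc]
        exact mul_le_mul_of_nonneg_left h h1.le
    · right
      obtain ⟨hy1, hy2⟩ := genA_subset hα (k + 1) (n + 1) hy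
      have hp1 := aux_prod_pos hα (k + 1) n
      have hp2 : (∏ j ∈ Finset.range (k + 1), α (n + j)) ≤ α n := by
        rw [aux_prod_shift]
        nlinarith [aux_prod_pos hα k (n + 1), aux_prod_le_one hα k (n + 1)]
      have h3 := (hα (n + (k + 1))).1
      have h4 := (hα (n + (k + 1))).2
      nlinarith

end Aux

/-- for every `k`, the point `β = ∏_{j ≤ k} α_j` belongs to `T` and is
right-scattered with gap `μ(β) = (1 - 2 α_k) ∏_{j<k} α_j`, so `μ(β)/β = (1-2α_k)/α_k`. -/
theorem genCantor_scattered_points (α : ℕ → ℝ) (hα : ∀ k, 0 < α k ∧ α k < 1 / 2)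
    (hlim : Tendsto α atTop (nhds (1 / 2))) :
    ∀ k : ℕ,
      (∏ j ∈ Finset.range (k + 1), α j) ∈ genCantor α ∧
      0 < mu (genCantor α) (∏ j ∈ Finset.range (k + 1), α j) ∧
      mu (genCantor α) (∏ j ∈ Finset.range (k + 1), α j) =
        (1 - 2 * α k) * ∏ j ∈ Finset.range k, α j ∧
      mu (genCantor α) (∏ j ∈ Finset.range (k + 1), α j) /
          (∏ j ∈ Finset.range (k + 1), α j) = (1 - 2 * α k) / α k := by
  intro k
  set P : ℝ := ∏ j ∈ Finset.range k, α j with hP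
  have hPpos : 0 < P := Finset.prod_pos fun _ _ => (hα _).1
  have hβ : (∏ j ∈ Finset.range (k + 1), α j) = P * α k := Finset.prod_range_succ α k
  have hzero : ∀ m, (∏ j ∈ Finset.range m, α (0 + j)) = ∏ j ∈ Finset.range m, α j := by
    intro m; exact Finset.prod_congr rfl fun j _ => by rw [Nat.zero_add]
  -- membership of β
  have hmemβ : (∏ j ∈ Finset.range (k + 1), α j) ∈ genCantor α := by
    refine Set.mem_iInter.2 fun m => ?_
    have := beta_mem_genA hα k 0 m
    rwa [hzero] at this
  -- membership of γ
  have hmemγ : P * (1 - α k) ∈ genCantor α := by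
    refine Set.mem_iInter.2 fun m => ?_
    have := gamma_mem_genA hα k 0 m
    rwa [hzero, Nat.zero_add] at this
  have hβγ : (∏ j ∈ Finset.range (k + 1), α j) < P * (1 - α k) := by
    rw [hβ]
    have := (hα k).2
    nlinarith
  have hlb : ∀ t ∈ {t ∈ genCantor α | (∏ j ∈ Finset.range (k + 1), α j) < t},
      P * (1 - α k) ≤ t := by
    rintro t ⟨htT, htβ⟩
    have ht : t ∈ genA α 0 (k + 1) := Set.mem_iInter.1 htT (k + 1)
    rcases gap_genA hα k 0 t ht with h | h
    · rw [hzero] at h; exact absurd htβ (not_lt.2 h)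
    · rwa [hzero, Nat.zero_add] at h
  have hsInf : sInf {t ∈ genCantor α | (∏ j ∈ Finset.range (k + 1), α j) < t}
      = P * (1 - α k) := by
    apply le_antisymm
    · exact csInf_le ⟨P * (1 - α k), hlb⟩ ⟨hmemγ, hβγ⟩
    · exact le_csInf ⟨P * (1 - α k), hmemγ, hβγ⟩ hlb
  have hmu : mu (genCantor α) (∏ j ∈ Finset.range (k + 1), α j) = (1 - 2 * α k) * P := by
    rw [mu, hsInf, hβ]; ring
  refine ⟨hmemβ, ?_, hmu, ?_⟩
  · rw [hmu]
    have := (hα k).2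
    nlinarith
  · rw [hmu, hβ, mul_comm P (α k)]
    rw [div_eq_div_iff (mul_pos (hα k).1 hPpos).ne' (hα k).1.ne']
    ring
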